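/- If f : [0,T) → ℝ is locally Lipschitz with lower Dini derivative at every t at least f(t)(f(t) − ρ), and r : [0,T) → ℝ solves r' = r(r − ρ) with r(0) ≤ f(0), then r(t) ≤ f(t) for all t ∈ [0,T). -/

import Mathlib

/-- ODE comparison principle: if the lower Dini derivative of a locally Lipschitz
function `f` on `[0,T)` is at least `f(f − ρ)` everywhere, and `r` solves
`r' = r(r − ρ)` with `r(0) ≤ f(0)`, then `r ≤ f` on `[0,T)`. -/
theorem dini_ode_comparison (T ρ : ℝ) (hT : 0 < T)
    (f r : ℝ → ℝ)
    (hlip : LocallyLipschitzOn (Set.Ico 0 T) f)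
    (hdini : ∀ t ∈ Set.Ico (0:ℝ) T,
      f t * (f t - ρ) ≤
        Filter.liminf (fun h : ℝ => (f (t + h) - f t) / h)
          (nhdsWithin 0 (Set.Ioi 0)))
    (hr : ∀ t ∈ Set.Ico (0:ℝ) T, HasDerivAt r (r t * (r t - ρ)) t)
    (h0 : r 0 ≤ f 0) :
    ∀ t ∈ Set.Ico (0:ℝ) T, r t ≤ f t := by
  intro t ht
  obtain ⟨ht0, htT⟩ := ht
  rcases eq_or_lt_of_le ht0 with h | h
  · rwa [← h]
  -- work on [0, t] ⊆ [0, T)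
  have hsub : Set.Icc (0:ℝ) t ⊆ Set.Ico 0 T := fun y hy => ⟨hy.1, lt_of_le_of_lt hy.2 htT⟩
  have hsub' : Set.Ico (0:ℝ) t ⊆ Set.Ico 0 T := fun y hy => ⟨hy.1, hy.2.trans htT⟩
  -- continuity
  have hfc : ContinuousOn f (Set.Icc 0 t) := (hlip.continuousOn).mono hsub
  have hrc : ContinuousOn r (Set.Icc 0 t) := fun y hy =>
    ((hr y (hsub hy)).continuousAt).continuousWithinAt
  -- bound for r + f - ρ on the compact interval
  obtain ⟨M, hM⟩ : ∃ M, ∀ y ∈ Set.Icc (0:ℝ) t, r y + f y - ρ ≤ M := by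
    obtain ⟨y₀, _, hy₀⟩ := isCompact_Icc.exists_isMaxOn (Set.nonempty_Icc.2 ht0)
      ((hrc.add hfc).sub continuousOn_const)
    exact ⟨r y₀ + f y₀ - ρ, hy₀⟩
  set K : ℝ := max M 0 + 1 with hK
  have hK0 : (0:ℝ) < K := by positivity
  have hKM : M < K := lt_of_le_of_lt (le_max_left M 0) (lt_add_one _)
  -- the Dini/slope hypothesis in the form needed by the fencing lemma
  have hf' : ∀ x ∈ Set.Ico (0:ℝ) t, ∀ s, -(f x * (f x - ρ)) < s →
      ∃ᶠ z in nhdsWithin x (Set.Ioi x), slope (fun y => -f y) x z < s := by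
    intro x hx s hs
    have hxT : x ∈ Set.Ico (0:ℝ) T := hsub' hx
    -- local Lipschitz bound gives eventual lower bound for the slopes
    obtain ⟨K', u, hu, hKu⟩ := hlip hxT
    obtain ⟨v, hv, hvx, hvsub⟩ := mem_nhdsWithin.1 hu
    have hxu : x ∈ u := hvsub ⟨hvx, hxT⟩
    have hbound : ∀ᶠ h in nhdsWithin (0:ℝ) (Set.Ioi 0),
        -(K':ℝ) ≤ (f (x + h) - f x) / h := by
      have h1 : ∀ᶠ h in nhds (0:ℝ), x + h ∈ v := by
        have : Filter.Tendsto (fun h : ℝ => x + h) (nhds 0) (nhds x) := by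
          simpa using (continuous_add_left x).tendsto (0:ℝ)
        exact this (hv.mem_nhds hvx)
      have h2 : ∀ᶠ h in nhdsWithin (0:ℝ) (Set.Ioi 0), x + h ∈ v :=
        nhdsWithin_le_nhds h1
      have h3 : Set.Ioo (0:ℝ) (T - x) ∈ nhdsWithin (0:ℝ) (Set.Ioi 0) :=
        Ioo_mem_nhdsGT_of_mem ⟨le_refl (0:ℝ), by linarith [hxT.2]⟩
      filter_upwards [h2, h3] with h hv2 hh
      have hh0 : 0 < h := hh.1
      have hmem : x + h ∈ u := hvsub ⟨hv2, ⟨by linarith [hxT.1], by linarith [hh.2]⟩⟩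
      have habs : |f (x + h) - f x| ≤ (K' : ℝ) * h := by
        have hd := hKu.dist_le_mul (x + h) hmem x hxu
        rw [Real.dist_eq, Real.dist_eq] at hd
        simpa [abs_of_pos hh0] using hd
      rw [le_div_iff₀ hh0]
      have h4 := neg_abs_le (f (x + h) - f x)
      linarith
    have hlim := hdini x hxT
    have hlt : -s < Filter.liminf (fun h : ℝ => (f (x + h) - f x) / h)
        (nhdsWithin 0 (Set.Ioi 0)) := lt_of_lt_of_le (by linarith) hlim
    have hev : ∀ᶠ h in nhdsWithin (0:ℝ) (Set.Ioi 0), -s < (f (x + h) - f x) / h :=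
      Filter.eventually_lt_of_lt_liminf hlt ⟨-(K':ℝ), hbound⟩
    -- push forward along `h ↦ x + h`
    have htend : Filter.Tendsto (fun h : ℝ => x + h) (nhdsWithin 0 (Set.Ioi 0))
        (nhdsWithin x (Set.Ioi x)) := by
      apply tendsto_nhdsWithin_of_tendsto_nhds_of_eventually_within
      · have h1 : Filter.Tendsto (fun h : ℝ => x + h) (nhds 0) (nhds x) := by
          simpa using (continuous_add_left x).tendsto (0:ℝ)
        exact h1.mono_left nhdsWithin_le_nhds
      · filter_upwards [self_mem_nhdsWithin] with h hh
        exact lt_add_of_pos_right x hh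
    have hfreq : ∃ᶠ h in nhdsWithin (0:ℝ) (Set.Ioi 0),
        slope (fun y => -f y) x (x + h) < s := by
      apply (hev.and (eventually_mem_nhdsWithin)).frequently.mono
      rintro h ⟨hh1, hh2⟩
      have hh0 : (0:ℝ) < h := hh2
      have : slope (fun y => -f y) x (x + h) = -((f (x + h) - f x) / h) := by
        rw [slope_def_field]
        field_simp
        rw [add_sub_cancel_left, mul_div_cancel_left₀ _ hh0.ne']; ring
      rw [this]
      linarith
    exact htend.frequently hfreq
  -- main ε-perturbation argument
  have key : ∀ ε : ℝ, 0 < ε → r t ≤ f t + ε * Real.exp (K * t) := by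
    intro ε hε
    set B : ℝ → ℝ := fun y => -r y + ε * Real.exp (K * y) with hB
    set B' : ℝ → ℝ := fun y => -(r y * (r y - ρ)) + ε * (Real.exp (K * y) * K) with hB'
    have hBderiv : ∀ x ∈ Set.Ico (0:ℝ) t, HasDerivWithinAt B (B' x) (Set.Ici x) x := by
      intro x hx
      have h1 : HasDerivAt (fun y : ℝ => K * y) K x := by
        simpa using (hasDerivAt_id x).const_mul K
      have h2 : HasDerivAt (fun y : ℝ => Real.exp (K * y)) (Real.exp (K * x) * K) x := h1.exp
      have h3 : HasDerivAt B (-(r x * (r x - ρ)) + ε * (Real.exp (K * x) * K)) x :=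
        ((hr x (hsub' hx)).neg).add (h2.const_mul ε)
      exact h3.hasDerivWithinAt
    have hBc : ContinuousOn B (Set.Icc 0 t) :=
      (hrc.neg).add (continuousOn_const.mul (Real.continuous_exp.comp
        (continuous_const.mul continuous_id)).continuousOn)
    have ha : -f 0 ≤ B 0 := by
      simp only [hB, mul_zero, Real.exp_zero, mul_one]
      linarith
    have bound : ∀ x ∈ Set.Ico (0:ℝ) t, -f x = B x → -(f x * (f x - ρ)) < B' x := by
      intro x hx hfB
      have hexp : 0 < Real.exp (K * x) := Real.exp_pos _
      have heq : r x - f x = ε * Real.exp (K * x) := by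
        simp only [hB] at hfB; linarith
      have hMx : r x + f x - ρ ≤ M := hM x ⟨hx.1, hx.2.le⟩
      simp only [hB']
      nlinarith [mul_pos hε hexp]
    have := image_le_of_liminf_slope_right_lt_deriv_boundary' hfc.neg hf' ha hBc hBderiv bound
      (Set.right_mem_Icc.2 ht0)
    simp only [hB, Pi.neg_apply] at this
    linarith
  -- let ε → 0
  apply le_of_forall_pos_le_add
  intro ε' hε'
  have hexp : 0 < Real.exp (K * t) := Real.exp_pos _
  have h := key (ε' / Real.exp (K * t)) (by positivity)
  rw [div_mul_cancel₀ _ (ne_of_gt hexp)] at h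
  exact h
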